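/- Let Γ be a finite simple graph with distinct vertices u and v such that the edge between u and v is an isolated edge of Γ (i.e., u and v are adjacent and both have degree 1). Then Lights Out is universally solvable on the complement graph Γ^C if and only if Lights Out is universally solvable on (Γ \ {u, v})^C, where Γ \ {u, v} is the graph obtained from Γ by deleting the vertices u and v. -/
import Mathlib


open scoped Classical in
/-- The neighborhood matrix of a finite simple graph over the field `ZMod 2`:
the entry at `(i, j)` is `1` if `i = j` or `i` and `j` are adjacent, and `0` otherwise. -/
noncomputable def nbhdMatrix {V : Type} [Fintype V] [DecidableEq V] (G : SimpleGraph V) :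
    Matrix V V (ZMod 2) :=
  Matrix.of fun i j => if i = j ∨ G.Adj i j then 1 else 0

/-- Lights Out is universally solvable on a finite simple graph iff its neighborhood
matrix over `ZMod 2` is invertible. -/
def UniversallySolvable {V : Type} [Fintype V] [DecidableEq V] (G : SimpleGraph V) : Prop :=
  IsUnit (nbhdMatrix G)

/-- If the edge between distinct vertices `u` and `v` of a finite simple graph `Γ` is an
isolated edge (`u` and `v` are adjacent and both have degree 1), then Lights Out is
universally solvable on `Γᶜ` if and only if it is universally solvable on
`(Γ \ {u, v})ᶜ`, the complement of the graph obtained by deleting `u` and `v`. -/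
theorem universallySolvable_compl_iff_of_isolated_edge {V : Type} [Fintype V]
    [DecidableEq V] (G : SimpleGraph V) [DecidableRel G.Adj] (u v : V)
    (huv : G.Adj u v) (hu : G.degree u = 1) (hv : G.degree v = 1) :
    UniversallySolvable Gᶜ ↔
      UniversallySolvable (G.induce {w : V | w ≠ u ∧ w ≠ v})ᶜ := by
  classical
  have hne : u ≠ v := huv.ne
  simp only [SimpleGraph.degree] at hu hv
  set S : Set V := {w : V | w ≠ u ∧ w ≠ v} with hS
  have hNu : ∀ w, G.Adj u w ↔ w = v := by
    intro w
    have h1 : G.neighborFinset u = {v} := by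
      apply Finset.eq_singleton_iff_unique_mem.mpr
      refine ⟨by simpa using huv, ?_⟩
      intro x hx
      by_contra hxv
      have hsub : ({v, x} : Finset V) ⊆ G.neighborFinset u := by
        intro y hy
        simp only [Finset.mem_insert, Finset.mem_singleton] at hy
        rcases hy with rfl | rfl
        · simpa using huv
        · exact hx
      have h2 := Finset.card_le_card hsub
      rw [Finset.card_pair (Ne.symm hxv)] at h2
      omega
    rw [← SimpleGraph.mem_neighborFinset, h1, Finset.mem_singleton]
  have hNv : ∀ w, G.Adj v w ↔ w = u := by
    intro w
    have h1 : G.neighborFinset v = {u} := by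
      apply Finset.eq_singleton_iff_unique_mem.mpr
      refine ⟨by simpa using huv.symm, ?_⟩
      intro x hx
      by_contra hxu
      have hsub : ({u, x} : Finset V) ⊆ G.neighborFinset v := by
        intro y hy
        simp only [Finset.mem_insert, Finset.mem_singleton] at hy
        rcases hy with rfl | rfl
        · simpa using huv.symm
        · exact hx
      have h2 := Finset.card_le_card hsub
      rw [Finset.card_pair (Ne.symm hxu)] at h2
      omega
    rw [← SimpleGraph.mem_neighborFinset, h1, Finset.mem_singleton]
  -- the reindexing equivalence
  let e : (Fin 2 ⊕ ↥S) ≃ V :=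
  { toFun := Sum.elim ![u, v] Subtype.val
    invFun := fun w =>
      if h1 : w = u then Sum.inl 0
      else if h2 : w = v then Sum.inl 1
      else Sum.inr ⟨w, h1, h2⟩
    left_inv := by
      rintro (i | ⟨w, hw1, hw2⟩)
      · fin_cases i <;> simp [hne, Ne.symm hne]
      · simp [hw1, hw2]
    right_inv := by
      intro w
      by_cases h1 : w = u
      · subst h1; simp
      · by_cases h2 : w = v
        · subst h2; simp [h1]
        · simp [h1, h2] }
  have hsub : (nbhdMatrix Gᶜ).submatrix e e =
      Matrix.fromBlocks 1 (Matrix.of fun _ _ => 1) (Matrix.of fun _ _ => 1)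
        (nbhdMatrix (G.induce S)ᶜ) := by
    ext i j
    rcases i with i | i <;> rcases j with j | j
    · fin_cases i <;> fin_cases j <;>
        simp [e, nbhdMatrix, SimpleGraph.compl_adj, hne, Ne.symm hne, huv, huv.symm,
          Matrix.one_apply]
    · obtain ⟨w, hw1, hw2⟩ := j
      fin_cases i <;>
        simp [e, nbhdMatrix, SimpleGraph.compl_adj, hNu, hNv, Ne.symm hw1, Ne.symm hw2,
          hw1, hw2]
    · obtain ⟨w, hw1, hw2⟩ := i
      have hwu : ¬ G.Adj w u := fun h => hw2 ((hNu w).mp h.symm)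
      have hwv : ¬ G.Adj w v := fun h => hw1 ((hNv w).mp h.symm)
      fin_cases j <;>
        simp [e, nbhdMatrix, SimpleGraph.compl_adj, hw1, hw2, hwu, hwv]
    · obtain ⟨w, hw⟩ := i; obtain ⟨x, hx⟩ := j
      by_cases hwx : w = x <;>
        simp [e, nbhdMatrix, SimpleGraph.compl_adj, Subtype.ext_iff, hwx]
  rw [UniversallySolvable, UniversallySolvable, Matrix.isUnit_iff_isUnit_det,
    Matrix.isUnit_iff_isUnit_det]
  have hCB : (Matrix.of fun (_ : ↥S) (_ : Fin 2) => (1:ZMod 2)) *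
      (Matrix.of fun (_ : Fin 2) (_ : ↥S) => (1:ZMod 2)) = 0 := by
    ext i j
    simp [Matrix.mul_apply, Fin.sum_univ_two]
    decide
  have hdet : (nbhdMatrix Gᶜ).det = (nbhdMatrix (G.induce S)ᶜ).det := by
    rw [← Matrix.det_submatrix_equiv_self e, hsub, Matrix.det_fromBlocks_one₁₁, hCB, sub_zero]
  rw [hdet]
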